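/- arXiv:1407.2197 — 2 statements merged into one kernel-verified Lean document; each statement's English description precedes it below -/
import Mathlib

section
/- Fix an integer d ≥ 2 and let p be the up-sampled trinomial circular array of order d. For every n ≥ 0, the three-choice corridor number c'_n satisfies c'_n = p_{n,n} − p_{n,n+d}. -/
/-- Binomial coefficient `C(n,x)` with integer lower argument, zero when `x < 0` or `x > n`. -/
noncomputable def binomZ (n : ℕ) (x : ℤ) : ℕ := if 0 ≤ x then n.choose x.toNat else 0

/-- Circular Pascal array of order `d` with initial offset `y0`:
`σ_{n,k} = Σ_{i=0}^{y0} Σ_{j∈ℤ} C(n, k − i + d·j)`. -/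
noncomputable def circPascal (d y0 n : ℕ) (k : ℤ) : ℕ :=
  ∑ i ∈ Finset.range (y0 + 1), ∑ᶠ j : ℤ, binomZ n (k - i + d * j)

/-- Up-sampled trinomial circular array of order `d`: row 0 is the indicator of
`k ≡ 0` or `1 (mod 2d)`, and `p_{n+1,k} = p_{n,k} + p_{n,k−1} + p_{n,k−2}`. -/
def trinomP (d : ℕ) : ℕ → ℤ → ℕ
  | 0, k => if (2 * (d : ℤ)) ∣ k ∨ (2 * (d : ℤ)) ∣ (k - 1) then 1 else 0
  | n + 1, k => trinomP d n k + trinomP d n (k - 1) + trinomP d n (k - 2)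



lemma trinomP_zero (d : ℕ) (k : ℤ) :
    trinomP d 0 k = if (2 * (d : ℤ)) ∣ k ∨ (2 * (d : ℤ)) ∣ (k - 1) then 1 else 0 := rfl

lemma trinomP_succ (d n : ℕ) (k : ℤ) :
    trinomP d (n+1) k = trinomP d n k + trinomP d n (k - 1) + trinomP d n (k - 2) := rfl

lemma trinomP_period (d : ℕ) : ∀ n (k : ℤ), trinomP d n (k + 2*d) = trinomP d n k := by
  intro n
  induction n with
  | zero =>
    intro k
    rw [trinomP_zero, trinomP_zero]
    have h2 : (2*(d:ℤ)) ∣ (2*(d:ℤ)) := dvd_refl _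
    refine if_congr (or_congr ?_ ?_) rfl rfl
    · constructor
      · intro h; have := h.sub h2; simpa using this
      · intro h; exact h.add h2
    · constructor
      · intro h
        have := h.sub h2
        have e : k + 2*(d:ℤ) - 1 - 2*(d:ℤ) = k - 1 := by ring
        rwa [e] at this
      · intro h
        have := h.add h2
        have e : k - 1 + 2*(d:ℤ) = k + 2*(d:ℤ) - 1 := by ring
        rwa [e] at this
  | succ n ih =>
    intro k
    rw [trinomP_succ, trinomP_succ, show k + 2*(d:ℤ) - 1 = (k-1) + 2*d by ring,
      show k + 2*(d:ℤ) - 2 = (k-2) + 2*d by ring, ih, ih, ih]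

lemma trinomP_symm (d : ℕ) : ∀ n (k : ℤ), trinomP d n (2*n + 1 - k) = trinomP d n k := by
  intro n
  induction n with
  | zero =>
    intro k
    rw [trinomP_zero, trinomP_zero]
    refine if_congr ?_ rfl rfl
    have e1 : 2*((0:ℕ):ℤ)+1-k = -(k-1) := by push_cast; ring
    rw [e1, show -(k-1) - 1 = -k by ring, dvd_neg, dvd_neg, or_comm]
  | succ n ih =>
    intro k
    rw [trinomP_succ, trinomP_succ,
      show 2*((n+1:ℕ):ℤ)+1-k = 2*(n:ℤ)+1-(k-2) by push_cast; ring]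
    rw [show 2*(n:ℤ)+1-(k-2) - 1 = 2*(n:ℤ)+1-(k-1) by ring,
      show 2*(n:ℤ)+1-(k-2) - 2 = 2*(n:ℤ)+1-k by ring, ih, ih, ih]
    omega

/-- `F d n h = p_{n,n+h} - p_{n,n+d+h}` as an integer. -/
def Ftri (d n : ℕ) (h : ℤ) : ℤ :=
  (trinomP d n ((n:ℤ) + h) : ℤ) - (trinomP d n ((n:ℤ) + d + h) : ℤ)

lemma Ftri_one (d n : ℕ) : Ftri d n 1 = Ftri d n 0 := by
  unfold Ftri
  have h1 : trinomP d n ((n:ℤ) + 1) = trinomP d n (n:ℤ) := by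
    rw [show (n:ℤ) + 1 = 2*(n:ℤ) + 1 - n by ring, trinomP_symm]
  have h2 : trinomP d n ((n:ℤ) + d + 1) = trinomP d n ((n:ℤ) + d) := by
    have hp := trinomP_period d n ((n:ℤ) - d)
    rw [show (n:ℤ) - d + 2*d = (n:ℤ) + d by ring] at hp
    rw [show (n:ℤ) + d + 1 = 2*(n:ℤ) + 1 - ((n:ℤ) - d) by ring, trinomP_symm, ← hp]
  rw [h1, h2, add_zero, add_zero]

/-- `G d n a = Σ_{m=1}^a F d n m`. -/
noncomputable def Gtri (d n : ℕ) (a : ℤ) : ℤ := ∑ m ∈ Finset.Icc (1:ℤ) a, Ftri d n m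

lemma Gtri_nonpos (d n : ℕ) {a : ℤ} (ha : a ≤ 0) : Gtri d n a = 0 := by
  unfold Gtri
  rw [Finset.Icc_eq_empty (by omega), Finset.sum_empty]

lemma Gtri_d (d n : ℕ) : Gtri d n (d:ℤ) = 0 := by
  unfold Gtri Ftri
  rw [Finset.sum_sub_distrib, sub_eq_zero]
  refine Finset.sum_nbij' (fun m => (d:ℤ) + 1 - m) (fun m => (d:ℤ) + 1 - m) ?_ ?_ ?_ ?_ ?_
  · intro m hm; simp only [Finset.mem_Icc] at *; omega
  · intro m hm; simp only [Finset.mem_Icc] at *; omega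
  · intro m _; ring
  · intro m _; ring
  · intro m hm
    congr 1
    rw [show (n:ℤ) + d + ((d:ℤ) + 1 - m) = ((n:ℤ) + 1 - m) + 2*d by ring, trinomP_period,
      show (n:ℤ) + 1 - m = 2*(n:ℤ) + 1 - ((n:ℤ) + m) by ring, trinomP_symm]

lemma Ftri_succ (d n : ℕ) (h : ℤ) :
    Ftri d (n+1) h = Ftri d n (h+1) + Ftri d n h + Ftri d n (h-1) := by
  unfold Ftri
  rw [show ((n+1:ℕ):ℤ) = (n:ℤ)+1 by push_cast; ring, trinomP_succ, trinomP_succ]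
  push_cast
  ring_nf

lemma Gtri_succ (d n : ℕ) {a : ℤ} (ha : 1 ≤ a) :
    Gtri d (n+1) a = Gtri d n (a-1) + Gtri d n a + Gtri d n (a+1) := by
  have hsplit : Gtri d (n+1) a
      = (∑ m ∈ Finset.Icc (1:ℤ) a, Ftri d n (m+1)) + (∑ m ∈ Finset.Icc (1:ℤ) a, Ftri d n m)
        + (∑ m ∈ Finset.Icc (1:ℤ) a, Ftri d n (m-1)) := by
    unfold Gtri
    rw [← Finset.sum_add_distrib, ← Finset.sum_add_distrib]
    exact Finset.sum_congr rfl fun m _ => Ftri_succ d n m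
  have hA : ∑ m ∈ Finset.Icc (1:ℤ) a, Ftri d n (m+1) = Gtri d n (a+1) - Ftri d n 1 := by
    have h1 : Gtri d n (a+1) = Ftri d n 1 + ∑ m ∈ Finset.Ioc (1:ℤ) (a+1), Ftri d n m := by
      unfold Gtri
      rw [Finset.Icc_eq_cons_Ioc (by omega), Finset.sum_cons]
    have h2 : ∑ m ∈ Finset.Icc (1:ℤ) a, Ftri d n (m+1)
        = ∑ m ∈ Finset.Ioc (1:ℤ) (a+1), Ftri d n m := by
      refine Finset.sum_nbij' (fun m => m + 1) (fun m => m - 1) ?_ ?_ ?_ ?_ ?_ <;>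
        intro m hm <;> simp only [Finset.mem_Icc, Finset.mem_Ioc] at * <;> first | omega | rfl
    rw [h2, h1]; ring
  have hC : ∑ m ∈ Finset.Icc (1:ℤ) a, Ftri d n (m-1) = Ftri d n 0 + Gtri d n (a-1) := by
    have h1 : ∑ m ∈ Finset.Icc (0:ℤ) (a-1), Ftri d n m
        = Ftri d n 0 + ∑ m ∈ Finset.Ioc (0:ℤ) (a-1), Ftri d n m := by
      rw [Finset.Icc_eq_cons_Ioc (by omega), Finset.sum_cons]
    have h2 : ∑ m ∈ Finset.Icc (1:ℤ) a, Ftri d n (m-1)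
        = ∑ m ∈ Finset.Icc (0:ℤ) (a-1), Ftri d n m := by
      refine Finset.sum_nbij' (fun m => m - 1) (fun m => m + 1) ?_ ?_ ?_ ?_ ?_ <;>
        intro m hm <;> simp only [Finset.mem_Icc] at * <;> first | omega | rfl
    have h3 : Finset.Ioc (0:ℤ) (a-1) = Finset.Icc (1:ℤ) (a-1) := by
      ext m; simp only [Finset.mem_Icc, Finset.mem_Ioc]; omega
    rw [h2, h1, h3]; rfl
  rw [hsplit, hA, hC, Ftri_one]
  unfold Gtri
  ring

/-- Recursive corridor-walk count. -/
def Wcnt (d : ℕ) : ℕ → ℤ → ℕ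
  | 0, _ => 1
  | n+1, a =>
      (if 1 ≤ a + -1 ∧ a + -1 ≤ (d:ℤ) - 1 then Wcnt d n (a + -1) else 0)
    + (if 1 ≤ a + 0 ∧ a + 0 ≤ (d:ℤ) - 1 then Wcnt d n (a + 0) else 0)
    + (if 1 ≤ a + 1 ∧ a + 1 ≤ (d:ℤ) - 1 then Wcnt d n (a + 1) else 0)

lemma trinomP_row0_one (d : ℕ) : trinomP d 0 1 = 1 := by
  rw [trinomP_zero, if_pos (Or.inr (by simp))]

lemma trinomP_row0_zero (d : ℕ) {k : ℤ} (h1 : 0 < k) (h2 : k < 2*d) (h3 : k ≠ 1) :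
    trinomP d 0 k = 0 := by
  rw [trinomP_zero, if_neg]
  rintro (h | h)
  · have := Int.le_of_dvd h1 h; omega
  · have := Int.le_of_dvd (by omega) h; omega

lemma Gtri_zero_row (d : ℕ) (hd : 2 ≤ d) {a : ℤ} (h1 : 1 ≤ a) (h2 : a ≤ (d:ℤ) - 1) :
    Gtri d 0 a = 1 := by
  unfold Gtri
  have : ∀ m ∈ Finset.Icc (1:ℤ) a, Ftri d 0 m = if m = 1 then 1 else 0 := by
    intro m hm
    simp only [Finset.mem_Icc] at hm
    unfold Ftri
    have hd2 : trinomP d 0 (((0:ℕ):ℤ) + d + m) = 0 := by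
      rw [show ((0:ℕ):ℤ) + d + m = (d:ℤ) + m by push_cast; ring]
      exact trinomP_row0_zero d (by omega) (by omega) (by omega)
    rw [hd2, show ((0:ℕ):ℤ) + m = m by push_cast; ring]
    by_cases hm1 : m = 1
    · simp [hm1, trinomP_row0_one]
    · rw [if_neg hm1, trinomP_row0_zero d (by omega) (by omega) hm1]
      simp
  rw [Finset.sum_congr rfl this, Finset.sum_ite_eq' (Finset.Icc (1:ℤ) a) 1 (fun _ => 1),
    if_pos (by simp only [Finset.mem_Icc]; omega)]

lemma Wcnt_eq_Gtri (d : ℕ) (hd : 2 ≤ d) :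
    ∀ n (a : ℤ), 1 ≤ a → a ≤ (d:ℤ) - 1 → (Wcnt d n a : ℤ) = Gtri d n a := by
  intro n
  induction n with
  | zero => intro a h1 h2; rw [Gtri_zero_row d hd h1 h2]; rfl
  | succ n ih =>
    intro a h1 h2
    have hL : ((if 1 ≤ a + -1 ∧ a + -1 ≤ (d:ℤ) - 1 then Wcnt d n (a + -1) else 0 : ℕ) : ℤ)
        = Gtri d n (a - 1) := by
      by_cases h : 1 ≤ a + -1 ∧ a + -1 ≤ (d:ℤ) - 1
      · rw [if_pos h, ih _ h.1 h.2, show a + -1 = a - 1 by ring]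
      · rw [if_neg h, Gtri_nonpos d n (by omega)]; rfl
    have hM : ((if 1 ≤ a + 0 ∧ a + 0 ≤ (d:ℤ) - 1 then Wcnt d n (a + 0) else 0 : ℕ) : ℤ)
        = Gtri d n a := by
      rw [if_pos (by omega), show a + 0 = a by ring, ih _ h1 h2]
    have hR : ((if 1 ≤ a + 1 ∧ a + 1 ≤ (d:ℤ) - 1 then Wcnt d n (a + 1) else 0 : ℕ) : ℤ)
        = Gtri d n (a + 1) := by
      by_cases h : 1 ≤ a + 1 ∧ a + 1 ≤ (d:ℤ) - 1
      · rw [if_pos h, ih _ h.1 h.2]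
      · rw [if_neg h]
        have : a + 1 = (d:ℤ) := by omega
        rw [this, Gtri_d]; rfl
    show ((_ + _ + _ : ℕ) : ℤ) = _
    rw [Nat.cast_add, Nat.cast_add, hL, hM, hR, Gtri_succ d n h1]
/-- Three-choice corridor number: the number of sequences in `{−1,0,+1}` of length `n`
whose partial sums, shifted by the starting height `1`, stay in `{1,…,d−1}`. -/
noncomputable def motzkinCount (d n : ℕ) : ℕ :=
  Nat.card {r : Fin n → ℤ // (∀ i, r i = -1 ∨ r i = 0 ∨ r i = 1) ∧
    ∀ j : Fin n, 1 ≤ 1 + ∑ i ∈ Finset.Iic j, r i ∧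
      1 + ∑ i ∈ Finset.Iic j, r i ≤ (d : ℤ) - 1}



section Comb
/-- Walk predicate: steps in `{-1,0,1}` and partial sums from `a` stay in the corridor. -/
def OkP (d : ℕ) (a : ℤ) {n : ℕ} (r : Fin n → ℤ) : Prop :=
  (∀ i, r i = -1 ∨ r i = 0 ∨ r i = 1) ∧
    ∀ j : Fin n, 1 ≤ a + ∑ i ∈ Finset.Iic j, r i ∧ a + ∑ i ∈ Finset.Iic j, r i ≤ (d:ℤ) - 1

/-- Number of corridor walks of length `n` starting at `a`. -/
noncomputable def Mc (d n : ℕ) (a : ℤ) : ℕ := Nat.card {r : Fin n → ℤ // OkP d a r}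

lemma sum_Iic_zero {n : ℕ} (r : Fin (n+1) → ℤ) :
    ∑ i ∈ Finset.Iic (0 : Fin (n+1)), r i = r 0 := by
  have h : Finset.Iic (0 : Fin (n+1)) = {0} := by
    ext k; simp [Fin.le_zero_iff]
  rw [h, Finset.sum_singleton]

lemma sum_Iic_succ {n : ℕ} (r : Fin (n+1) → ℤ) (j : Fin n) :
    ∑ i ∈ Finset.Iic j.succ, r i = r 0 + ∑ i ∈ Finset.Iic j, r i.succ := by
  have h : Finset.Iic j.succ = insert 0 ((Finset.Iic j).image Fin.succ) := by
    ext k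
    simp only [Finset.mem_Iic, Finset.mem_insert, Finset.mem_image]
    constructor
    · intro hk
      rcases Fin.eq_zero_or_eq_succ k with h0 | ⟨i, rfl⟩
      · exact Or.inl h0
      · exact Or.inr ⟨i, by rwa [← Fin.succ_le_succ_iff], rfl⟩
    · rintro (rfl | ⟨i, hi, rfl⟩)
      · exact Fin.zero_le _
      · exact Fin.succ_le_succ_iff.mpr hi
  rw [h, Finset.sum_insert, Finset.sum_image]
  · intro i _ i' _ hii; exact Fin.succ_injective _ hii
  · simp only [Finset.mem_image]; rintro ⟨i, _, hi⟩; exact (Fin.succ_ne_zero i) hi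

lemma okP_cons_iff {d n : ℕ} {a x : ℤ} (s : Fin n → ℤ) (hx : x = -1 ∨ x = 0 ∨ x = 1) :
    OkP d a (Fin.cons x s) ↔ (1 ≤ a + x ∧ a + x ≤ (d:ℤ) - 1) ∧ OkP d (a + x) s := by
  constructor
  · rintro ⟨hs, hc⟩
    have h0 := hc 0
    rw [sum_Iic_zero, Fin.cons_zero] at h0
    refine ⟨h0, fun i => ?_, fun j => ?_⟩
    · have := hs i.succ; rwa [Fin.cons_succ] at this
    · have := hc j.succ
      rw [sum_Iic_succ, Fin.cons_zero] at this
      simp only [Fin.cons_succ] at this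
      rwa [← add_assoc] at this
  · rintro ⟨hcorr, hs, hc⟩
    refine ⟨fun i => ?_, fun j => ?_⟩
    · refine Fin.cases ?_ ?_ i
      · rw [Fin.cons_zero]; exact hx
      · intro i'; rw [Fin.cons_succ]; exact hs i'
    · refine Fin.cases ?_ ?_ j
      · rw [sum_Iic_zero, Fin.cons_zero]; exact hcorr
      · intro j'
        rw [sum_Iic_succ, Fin.cons_zero]
        simp only [Fin.cons_succ]
        rw [← add_assoc]
        exact hc j'

lemma finite_subtype_steps {n : ℕ} (P : (Fin n → ℤ) → Prop)
    (h : ∀ r, P r → ∀ i, r i = -1 ∨ r i = 0 ∨ r i = 1) : Finite {r : Fin n → ℤ // P r} := by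
  have hmem : ∀ (r : {r : Fin n → ℤ // P r}) (i : Fin n), r.1 i ∈ Set.Icc (-1:ℤ) 1 := by
    intro r i
    rcases h r.1 r.2 i with h' | h' | h' <;> rw [h'] <;> constructor <;> norm_num
  have : Finite (Set.Icc (-1:ℤ) 1) := (Set.finite_Icc _ _).to_subtype
  refine Finite.of_injective
    (fun r (i : Fin n) => (⟨r.1 i, hmem r i⟩ : Set.Icc (-1:ℤ) 1)) ?_
  intro r s hrs
  apply Subtype.ext; funext i
  exact congrArg Subtype.val (congrFun hrs i)

lemma card_cons_fiber (d n : ℕ) (a x : ℤ) (hx : x = -1 ∨ x = 0 ∨ x = 1) :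
    Nat.card {s : Fin n → ℤ // OkP d a (Fin.cons x s)}
      = if 1 ≤ a + x ∧ a + x ≤ (d:ℤ) - 1 then Mc d n (a + x) else 0 := by
  by_cases h : 1 ≤ a + x ∧ a + x ≤ (d:ℤ) - 1
  · rw [if_pos h]
    exact Nat.card_congr (Equiv.subtypeEquivRight fun s =>
      ⟨fun H => ((okP_cons_iff s hx).mp H).2, fun H => (okP_cons_iff s hx).mpr ⟨h, H⟩⟩)
  · rw [if_neg h]
    have : IsEmpty {s : Fin n → ℤ // OkP d a (Fin.cons x s)} :=
      ⟨fun s => h ((okP_cons_iff s.1 hx).mp s.2).1⟩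
    exact Nat.card_of_isEmpty

noncomputable def splitEquiv (d n : ℕ) (a : ℤ) :
    {r : Fin (n+1) → ℤ // OkP d a r} ≃
      ({s : Fin n → ℤ // OkP d a (Fin.cons (-1) s)} ⊕
       ({s : Fin n → ℤ // OkP d a (Fin.cons 0 s)} ⊕
        {s : Fin n → ℤ // OkP d a (Fin.cons 1 s)})) where
  toFun r :=
    if h : r.1 0 = -1 then
      Sum.inl ⟨Fin.tail r.1, by
        rw [show (-1:ℤ) = r.1 0 from h.symm, Fin.cons_self_tail]; exact r.2⟩
    else if h0 : r.1 0 = 0 then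
      Sum.inr (Sum.inl ⟨Fin.tail r.1, by
        rw [show (0:ℤ) = r.1 0 from h0.symm, Fin.cons_self_tail]; exact r.2⟩)
    else
      Sum.inr (Sum.inr ⟨Fin.tail r.1, by
        have h1 : r.1 0 = 1 := by
          rcases r.2.1 0 with h' | h' | h'
          · exact absurd h' h
          · exact absurd h' h0
          · exact h'
        rw [show (1:ℤ) = r.1 0 from h1.symm, Fin.cons_self_tail]; exact r.2⟩)
  invFun := Sum.elim (fun s => ⟨Fin.cons (-1) s.1, s.2⟩)
      (Sum.elim (fun s => ⟨Fin.cons 0 s.1, s.2⟩) (fun s => ⟨Fin.cons 1 s.1, s.2⟩))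
  left_inv r := by
    by_cases h : r.1 0 = -1
    · simp only [dif_pos h, Sum.elim_inl]
      exact Subtype.ext ((congrArg (fun z : ℤ => Fin.cons z (Fin.tail r.1)) h).symm.trans
        (Fin.cons_self_tail r.1))
    · by_cases h0 : r.1 0 = 0
      · simp only [dif_neg h, dif_pos h0, Sum.elim_inr, Sum.elim_inl]
        exact Subtype.ext ((congrArg (fun z : ℤ => Fin.cons z (Fin.tail r.1)) h0).symm.trans
          (Fin.cons_self_tail r.1))
      · have h1 : r.1 0 = 1 := by
          rcases r.2.1 0 with h' | h' | h'
          · exact absurd h' h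
          · exact absurd h' h0
          · exact h'
        simp only [dif_neg h, dif_neg h0, Sum.elim_inr]
        exact Subtype.ext ((congrArg (fun z : ℤ => Fin.cons z (Fin.tail r.1)) h1).symm.trans
          (Fin.cons_self_tail r.1))
  right_inv s := by
    rcases s with s | s | s
    · simp only [Sum.elim_inl, Fin.cons_zero, Fin.tail_cons]
      norm_num
    · simp only [Sum.elim_inr, Sum.elim_inl, Fin.cons_zero, Fin.tail_cons]
      norm_num
    · simp only [Sum.elim_inr, Fin.cons_zero, Fin.tail_cons]
      norm_num

lemma Mc_succ (d n : ℕ) (a : ℤ) :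
    Mc d (n+1) a =
      (if 1 ≤ a + -1 ∧ a + -1 ≤ (d:ℤ) - 1 then Mc d n (a + -1) else 0)
      + ((if 1 ≤ a + 0 ∧ a + 0 ≤ (d:ℤ) - 1 then Mc d n (a + 0) else 0)
      + (if 1 ≤ a + 1 ∧ a + 1 ≤ (d:ℤ) - 1 then Mc d n (a + 1) else 0)) := by
  haveI hA : Finite {s : Fin n → ℤ // OkP d a (Fin.cons (-1) s)} :=
    finite_subtype_steps _ (fun s hs i => by have := hs.1 i.succ; rwa [Fin.cons_succ] at this)
  haveI hB : Finite {s : Fin n → ℤ // OkP d a (Fin.cons 0 s)} :=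
    finite_subtype_steps _ (fun s hs i => by have := hs.1 i.succ; rwa [Fin.cons_succ] at this)
  haveI hC : Finite {s : Fin n → ℤ // OkP d a (Fin.cons 1 s)} :=
    finite_subtype_steps _ (fun s hs i => by have := hs.1 i.succ; rwa [Fin.cons_succ] at this)
  rw [Mc, Nat.card_congr (splitEquiv d n a), Nat.card_sum, Nat.card_sum,
    card_cons_fiber d n a (-1) (Or.inl rfl), card_cons_fiber d n a 0 (Or.inr (Or.inl rfl)),
    card_cons_fiber d n a 1 (Or.inr (Or.inr rfl))]

end Comb

lemma Mc_eq_Wcnt (d : ℕ) : ∀ n (a : ℤ), Mc d n a = Wcnt d n a := by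
  intro n
  induction n with
  | zero =>
    intro a
    have hall : ∀ r : Fin 0 → ℤ, OkP d a r := fun r => ⟨fun i => i.elim0, fun j => j.elim0⟩
    haveI : Unique {r : Fin 0 → ℤ // OkP d a r} :=
      ⟨⟨⟨fun i => i.elim0, hall _⟩⟩, fun r => Subtype.ext (funext fun i => i.elim0)⟩
    show Nat.card _ = 1
    exact Nat.card_unique
  | succ n ih =>
    intro a
    rw [Mc_succ]
    simp only [ih, Wcnt]
    ring

/-- The three-choice corridor number satisfies `c'_n = p_{n,n} − p_{n,n+d}` for the
up-sampled trinomial circular array of order `d`. -/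
theorem motzkin_eq_trinomP_diff (d : ℕ) (hd : 2 ≤ d) (n : ℕ) :
    (motzkinCount d n : ℤ) =
      (trinomP d n (n : ℤ) : ℤ) - (trinomP d n ((n : ℤ) + d) : ℤ) := by
  have h0 : motzkinCount d n = Mc d n 1 := rfl
  have hd' : (2:ℤ) ≤ d := by exact_mod_cast hd
  rw [h0, Mc_eq_Wcnt, Wcnt_eq_Gtri d hd n 1 le_rfl (by omega)]
  unfold Gtri
  rw [Finset.Icc_self, Finset.sum_singleton, Ftri_one]
  unfold Ftri
  rw [add_zero, add_zero]
end

section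
/- Fix an integer d ≥ 2. For every n ≥ 0, the three-choice corridor number c'_n satisfies c'_n = Σ_{j=0}^{n} C(n,j) · Σ_{m∈ℤ} [ C(j+1, 2dm − j + n) − C(j+1, 2dm − j + n + d) ], where the inner sum over m has only finitely many nonzero terms. -/
/-- free three-step walk counts -/
def W : ℕ → ℤ → ℕ
  | 0, k => if k = 0 then 1 else 0
  | (n+1), k => W n (k-1) + W n k + W n (k+1)

lemma W_eq_zero : ∀ (n : ℕ) (k : ℤ), n < k.natAbs → W n k = 0
  | 0, k, h => by simp only [W, if_neg (by omega : ¬ k = 0)]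
  | (n+1), k, h => by
      simp only [W]
      rw [W_eq_zero n (k-1) (by omega), W_eq_zero n k (by omega), W_eq_zero n (k+1) (by omega)]


lemma W_neg : ∀ (n : ℕ) (k : ℤ), W n (-k) = W n k
  | 0, k => by simp [W]
  | (n+1), k => by
      simp only [W]
      have h1 : -k - 1 = -(k+1) := by ring
      have h2 : -k + 1 = -(k-1) := by ring
      rw [h1, h2, W_neg n (k+1), W_neg n k, W_neg n (k-1)]
      omega

lemma binomZ_succ (n : ℕ) (x : ℤ) : binomZ (n+1) x = binomZ n x + binomZ n (x-1) := by
  unfold binomZ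
  rcases lt_trichotomy x 0 with h | h | h
  · rw [if_neg (by omega), if_neg (by omega), if_neg (by omega)]
  · subst h; simp
  · rw [if_pos (by omega), if_pos (by omega), if_pos (by omega)]
    have hx : x.toNat = (x-1).toNat + 1 := by omega
    rw [hx, Nat.choose_succ_succ', Nat.add_comm]

lemma binomZ_neg {n : ℕ} {x : ℤ} (h : x < 0) : binomZ n x = 0 := by
  unfold binomZ; rw [if_neg (by omega)]

lemma binomZ_big {n : ℕ} {x : ℤ} (h : (n : ℤ) < x) : binomZ n x = 0 := by
  unfold binomZ
  rcases le_or_gt 0 x with h0 | h0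
  · rw [if_pos h0]; exact Nat.choose_eq_zero_of_lt (by omega)
  · rw [if_neg (by omega)]

lemma S_eq (n : ℕ) (a : ℤ) :
    ∑ j ∈ Finset.range (n+1), n.choose j * binomZ (j+1) (a + (n:ℤ) - (j:ℤ))
      = W n a + W n (a-1) := by
  induction n generalizing a with
  | zero =>
      rw [Finset.sum_range_one]
      simp only [Nat.choose_self, one_mul, W]
      have h : a + ((0:ℕ):ℤ) - ((0:ℕ):ℤ) = a := by push_cast; ring
      rw [h]
      unfold binomZ
      rcases lt_trichotomy a 0 with h | h | h
      · rw [if_neg (by omega), if_neg (by omega), if_neg (by omega)]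
      · subst h; norm_num
      · rw [if_pos (by omega)]
        rcases eq_or_lt_of_le (show (1:ℤ) ≤ a by omega) with h1 | h1
        · rw [if_neg (by omega), if_pos (by omega)]
          have : a.toNat = 1 := by omega
          simp [this]
        · rw [if_neg (by omega), if_neg (by omega)]
          exact Nat.choose_eq_zero_of_lt (by omega)
  | succ n ih =>
      rw [Finset.sum_range_succ']
      have hstep : ∀ j ∈ Finset.range (n+1),
          (n+1).choose (j+1) * binomZ (j+1+1) (a + ((n+1:ℕ):ℤ) - ((j+1:ℕ):ℤ))
            = (n.choose j * binomZ (j+1) (a + (n:ℤ) - (j:ℤ))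
                + n.choose j * binomZ (j+1) ((a-1) + (n:ℤ) - (j:ℤ)))
              + n.choose (j+1) * binomZ ((j+1)+1) ((a+1) + (n:ℤ) - ((j+1:ℕ):ℤ)) := by
        intro j hj
        have h2 : a + ((n+1:ℕ):ℤ) - ((j+1:ℕ):ℤ) = a + (n:ℤ) - (j:ℤ) := by push_cast; ring
        have h4 : (a+1) + (n:ℤ) - ((j+1:ℕ):ℤ) = a + (n:ℤ) - (j:ℤ) := by push_cast; ring
        have h3 : binomZ (j+1+1) (a + (n:ℤ) - (j:ℤ))
            = binomZ (j+1) (a + (n:ℤ) - (j:ℤ)) + binomZ (j+1) ((a-1) + (n:ℤ) - (j:ℤ)) := by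
          rw [binomZ_succ]; congr 2; ring
        rw [h2, h4, Nat.choose_succ_succ n j, h3]
        ring
      rw [Finset.sum_congr rfl hstep, Finset.sum_add_distrib, Finset.sum_add_distrib]
      have e1 : (∑ j ∈ Finset.range (n+1),
            n.choose (j+1) * binomZ ((j+1)+1) ((a+1) + (n:ℤ) - ((j+1:ℕ):ℤ)))
            + (n+1).choose 0 * binomZ (0+1) (a + ((n+1:ℕ):ℤ) - ((0:ℕ):ℤ))
          = W n (a+1) + W n (a+1-1) := by
        have h0 : (n+1).choose 0 * binomZ (0+1) (a + ((n+1:ℕ):ℤ) - ((0:ℕ):ℤ))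
            = n.choose 0 * binomZ (0+1) ((a+1) + (n:ℤ) - ((0:ℕ):ℤ)) := by
          simp only [Nat.choose_zero_right, one_mul]
          congr 1
          push_cast; ring
        have hz : n.choose (n+1) * binomZ ((n+1)+1) ((a+1) + (n:ℤ) - ((n+1:ℕ):ℤ)) = 0 := by
          rw [Nat.choose_eq_zero_of_lt (by omega)]; ring
        have A := Finset.sum_range_succ'
          (fun j => n.choose j * binomZ (j+1) ((a+1) + (n:ℤ) - (j:ℤ))) (n+1)
        have B := Finset.sum_range_succ
          (fun j => n.choose j * binomZ (j+1) ((a+1) + (n:ℤ) - (j:ℤ))) (n+1)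
        rw [h0, ← A, B, hz, Nat.add_zero, ih (a+1)]
      rw [add_assoc, e1, ih a, ih (a-1)]
      have hW1 : W (n+1) a = W n (a-1) + W n a + W n (a+1) := rfl
      have hW2 : W (n+1) (a-1) = W n (a-1-1) + W n (a-1) + W n (a-1+1) := rfl
      have h5 : a - 1 + 1 = a := by ring
      have h6 : a + 1 - 1 = a := by ring
      have h7 : a - 1 - 1 = a - 1 + (n:ℤ) - (n:ℤ) - 1 := by ring
      rw [hW1, hW2, h5, h6]
      omega

open scoped Classical in
noncomputable def paths (d n : ℕ) : Finset (Fin n → ℤ) :=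
  (Fintype.piFinset fun _ => ({-1, 0, 1} : Finset ℤ)).filter
    (fun r => ∀ j : Fin n, 1 ≤ 1 + ∑ i ∈ Finset.Iic j, r i ∧
      1 + ∑ i ∈ Finset.Iic j, r i ≤ (d:ℤ) - 1)

open scoped Classical in
noncomputable def pathsTo (d n : ℕ) (y : ℤ) : Finset (Fin n → ℤ) :=
  (paths d n).filter (fun r => 1 + ∑ i, r i = y)

lemma mem_paths {d n : ℕ} {r : Fin n → ℤ} :
    r ∈ paths d n ↔ (∀ i, r i = -1 ∨ r i = 0 ∨ r i = 1) ∧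
      ∀ j : Fin n, 1 ≤ 1 + ∑ i ∈ Finset.Iic j, r i ∧
        1 + ∑ i ∈ Finset.Iic j, r i ≤ (d:ℤ) - 1 := by
  classical
  simp [paths, Fintype.mem_piFinset]

lemma mem_pathsTo {d n : ℕ} {y : ℤ} {r : Fin n → ℤ} :
    r ∈ pathsTo d n y ↔ r ∈ paths d n ∧ 1 + ∑ i, r i = y := by
  classical
  simp [pathsTo]

lemma motzkinCount_eq (d n : ℕ) : motzkinCount d n = (paths d n).card := by
  rw [motzkinCount, ← Nat.card_eq_finsetCard]
  apply Nat.card_congr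
  apply Equiv.subtypeEquivRight
  intro r
  rw [mem_paths]

lemma Iic_castSucc_eq {n : ℕ} (j : Fin n) :
    Finset.Iic (Fin.castSucc j) = (Finset.Iic j).map Fin.castSuccEmb := by
  ext i
  simp only [Finset.mem_Iic, Finset.mem_map, Fin.coe_castSuccEmb]
  constructor
  · intro h
    have hi : i.val < n := by
      have := h
      rw [Fin.le_def] at this
      simp only [Fin.coe_castSucc] at this
      omega
    refine ⟨⟨i.val, hi⟩, ?_, ?_⟩
    · rw [Fin.le_def] at h ⊢
      simpa using h
    · apply Fin.ext; simp
  · rintro ⟨a, ha, rfl⟩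
    rw [Fin.le_def] at ha ⊢
    simpa using ha

lemma sum_Iic_castSucc {n : ℕ} (r : Fin (n+1) → ℤ) (j : Fin n) :
    ∑ i ∈ Finset.Iic (Fin.castSucc j), r i = ∑ i ∈ Finset.Iic j, r (Fin.castSucc i) := by
  rw [Iic_castSucc_eq, Finset.sum_map]
  rfl

lemma Iic_last_eq {n : ℕ} : Finset.Iic (Fin.last n) = Finset.univ := by
  ext i
  simp [Fin.le_last]

lemma sum_univ_snoc {n : ℕ} (q : Fin n → ℤ) (s : ℤ) :
    ∑ i, (Fin.snoc q s : Fin (n+1) → ℤ) i = (∑ i, q i) + s := by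
  rw [Fin.sum_univ_castSucc]
  simp

lemma endpoint_mem {d n : ℕ} (hd : 2 ≤ d) {r : Fin n → ℤ} (hr : r ∈ paths d n) :
    1 + ∑ i, r i ∈ Finset.Icc (1:ℤ) ((d:ℤ)-1) := by
  rw [Finset.mem_Icc]
  cases n with
  | zero =>
      simp only [Finset.univ_eq_empty, Finset.sum_empty, add_zero]
      constructor
      · omega
      · have : (2:ℤ) ≤ (d:ℤ) := by exact_mod_cast hd
        omega
  | succ n =>
      have h := (mem_paths.mp hr).2 (Fin.last n)
      rw [Iic_last_eq] at h
      omega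

lemma card_paths_fiber {d n : ℕ} (hd : 2 ≤ d) :
    (paths d n).card = ∑ y ∈ Finset.Icc (1:ℤ) ((d:ℤ)-1), (pathsTo d n y).card := by
  classical
  rw [Finset.card_eq_sum_card_fiberwise (f := fun r => 1 + ∑ i, r i)
    (s := paths d n) (t := Finset.Icc (1:ℤ) ((d:ℤ)-1)) (fun r hr => endpoint_mem hd hr)]
  apply Finset.sum_congr rfl
  intro y _
  unfold pathsTo
  congr 1

lemma pathsTo_zero_card {d : ℕ} (y : ℤ) :
    (pathsTo d 0 y).card = if y = 1 then 1 else 0 := by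
  classical
  rcases eq_or_ne y 1 with rfl | hy
  · rw [if_pos rfl]
    have h1 : (default : Fin 0 → ℤ) ∈ pathsTo d 0 1 := by
      rw [mem_pathsTo, mem_paths]
      exact ⟨⟨fun i => i.elim0, fun j => j.elim0⟩, by simp⟩
    have h2 : pathsTo d 0 1 = {default} :=
      Finset.eq_singleton_iff_unique_mem.mpr ⟨h1, fun x _ => Subsingleton.elim x default⟩
    rw [h2, Finset.card_singleton]
  · rw [if_neg hy, Finset.card_eq_zero]
    apply Finset.eq_empty_of_forall_notMem
    intro r hr
    rw [mem_pathsTo] at hr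
    apply hy
    rw [← hr.2]
    simp

lemma pathsTo_out {d n : ℕ} {y : ℤ} (h : y < 1 ∨ (d:ℤ) - 1 < y) :
    pathsTo d (n+1) y = ∅ := by
  apply Finset.eq_empty_of_forall_notMem
  intro r hr
  rw [mem_pathsTo] at hr
  have h1 := (mem_paths.mp hr.1).2 (Fin.last n)
  rw [Iic_last_eq] at h1
  rw [hr.2] at h1
  omega

lemma card_pathsTo_succ {d n : ℕ} {y : ℤ} (hy1 : 1 ≤ y) (hy2 : y ≤ (d:ℤ) - 1) :
    (pathsTo d (n+1) y).card
      = (pathsTo d n (y-1)).card + (pathsTo d n y).card + (pathsTo d n (y+1)).card := by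
  classical
  set T : Finset ((Fin n → ℤ) × ℤ) :=
    ((pathsTo d n (y-1)) ×ˢ {(1:ℤ)} ∪ (pathsTo d n y) ×ˢ {(0:ℤ)})
      ∪ (pathsTo d n (y+1)) ×ˢ {(-1:ℤ)} with hT
  have key : ∀ (q : Fin n → ℤ) (s : ℤ), s = -1 ∨ s = 0 ∨ s = 1 →
      (Fin.snoc q s ∈ pathsTo d (n+1) y ↔ q ∈ pathsTo d n (y - s)) := by
    intro q s hs
    simp only [mem_pathsTo, mem_paths]
    constructor
    · rintro ⟨⟨hval, hbd⟩, hend⟩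
      refine ⟨⟨fun i => ?_, fun j => ?_⟩, ?_⟩
      · have := hval (Fin.castSucc i)
        rwa [Fin.snoc_castSucc] at this
      · have := hbd (Fin.castSucc j)
        rw [sum_Iic_castSucc] at this
        have he : ∀ i ∈ Finset.Iic j, (Fin.snoc q s : Fin (n+1) → ℤ) (Fin.castSucc i) = q i :=
          fun i _ => Fin.snoc_castSucc ..
        rwa [Finset.sum_congr rfl he] at this
      · rw [sum_univ_snoc] at hend
        omega
    · rintro ⟨⟨hval, hbd⟩, hend⟩
      refine ⟨⟨fun i => ?_, fun j => ?_⟩, ?_⟩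
      · induction i using Fin.lastCases with
        | last => rw [Fin.snoc_last]; exact hs
        | cast i => rw [Fin.snoc_castSucc]; exact hval i
      · induction j using Fin.lastCases with
        | last =>
            rw [Iic_last_eq, sum_univ_snoc]
            omega
        | cast j =>
            rw [sum_Iic_castSucc]
            have he : ∀ i ∈ Finset.Iic j, (Fin.snoc q s : Fin (n+1) → ℤ) (Fin.castSucc i) = q i :=
              fun i _ => Fin.snoc_castSucc ..
            rw [Finset.sum_congr rfl he]
            exact hbd j
      · rw [sum_univ_snoc]
        omega
  have hcard : (pathsTo d (n+1) y).card = T.card := by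
    apply Finset.card_nbij' (i := fun r => (Fin.init r, r (Fin.last n)))
      (j := fun p => Fin.snoc p.1 p.2)
    · intro r hr
      have hval := (mem_paths.mp (mem_pathsTo.mp hr).1).1 (Fin.last n)
      have hr' : (Fin.snoc (Fin.init r) (r (Fin.last n)) : Fin (n+1) → ℤ) ∈ pathsTo d (n+1) y := by
        rw [Fin.snoc_init_self]; exact hr
      have hmem := (key (Fin.init r) (r (Fin.last n)) hval).mp hr'
      rw [hT]
      simp only [Finset.mem_coe, Finset.mem_union, Finset.mem_product, Finset.mem_singleton]
      rcases hval with h | h | h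
      · right
        rw [h] at hmem
        rw [sub_neg_eq_add] at hmem
        exact ⟨hmem, h⟩
      · left; right
        rw [h] at hmem
        rw [sub_zero] at hmem
        exact ⟨hmem, h⟩
      · left; left
        rw [h] at hmem
        exact ⟨hmem, h⟩
    · intro p hp
      rw [hT] at hp
      simp only [Finset.mem_coe, Finset.mem_union, Finset.mem_product, Finset.mem_singleton] at hp
      rcases hp with (⟨h1, h2⟩ | ⟨h1, h2⟩) | ⟨h1, h2⟩
      · exact (key p.1 p.2 (by omega)).mpr (by rw [h2]; exact h1)
      · exact (key p.1 p.2 (by omega)).mpr (by rw [h2, sub_zero]; exact h1)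
      · exact (key p.1 p.2 (by omega)).mpr (by rw [h2, sub_neg_eq_add]; exact h1)
    · intro r _
      exact Fin.snoc_init_self r
    · intro p _
      exact Prod.ext (by simp) (by simp)
  have hdisj1 : Disjoint ((pathsTo d n (y-1)) ×ˢ {(1:ℤ)}) ((pathsTo d n y) ×ˢ {(0:ℤ)}) := by
    rw [Finset.disjoint_left]
    rintro p hp hq
    simp only [Finset.mem_product, Finset.mem_singleton] at hp hq
    omega
  have hdisj2 : Disjoint ((pathsTo d n (y-1)) ×ˢ {(1:ℤ)} ∪ (pathsTo d n y) ×ˢ {(0:ℤ)})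
      ((pathsTo d n (y+1)) ×ˢ {(-1:ℤ)}) := by
    rw [Finset.disjoint_left]
    rintro p hp hq
    simp only [Finset.mem_union, Finset.mem_product, Finset.mem_singleton] at hp hq
    omega
  rw [hcard, hT, Finset.card_union_of_disjoint hdisj2, Finset.card_union_of_disjoint hdisj1]
  simp [Finset.card_product]

lemma W_succ (n : ℕ) (k : ℤ) : W (n+1) k = W n (k-1) + W n k + W n (k+1) := rfl

noncomputable def Bfun (d n : ℕ) (y : ℤ) : ℤ :=
  ∑ m ∈ Finset.Icc (-(n:ℤ)-1) ((n:ℤ)+1),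
    ((W n (y-1-2*(d:ℤ)*m) : ℤ) - (W n (y+1-2*(d:ℤ)*m) : ℤ))

lemma W_vanish {d : ℕ} (hd : 2 ≤ d) (n : ℕ) {c m : ℤ} (hc : |c| ≤ (d:ℤ)+1)
    (hm : (n:ℤ)+2 ≤ |m|) : W n (c - 2*(d:ℤ)*m) = 0 := by
  apply W_eq_zero
  have hd' : (2:ℤ) ≤ (d:ℤ) := by exact_mod_cast hd
  have h1 : |2*(d:ℤ)*m| = 2*(d:ℤ)*|m| := by
    rw [abs_mul, abs_of_nonneg (by linarith : (0:ℤ) ≤ 2*(d:ℤ))]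
  have h2 : |2*(d:ℤ)*m| - |c| ≤ |c - 2*(d:ℤ)*m| := by
    rw [abs_sub_comm]
    exact abs_sub_abs_le_abs_sub _ _
  have h3 : (n:ℤ) < |c - 2*(d:ℤ)*m| := by
    nlinarith [mul_nonneg (by linarith : (0:ℤ) ≤ |m| - ((n:ℤ)+2)) (by linarith : (0:ℤ) ≤ 2*(d:ℤ)),
      mul_nonneg (by linarith : (0:ℤ) ≤ (d:ℤ)-2) (by positivity : (0:ℤ) ≤ 2*(n:ℤ)+3)]
  have h4 : |c - 2*(d:ℤ)*m| = ((c - 2*(d:ℤ)*m).natAbs : ℤ) := Int.abs_eq_natAbs _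
  rw [h4] at h3
  exact_mod_cast h3

lemma Bfun_pad {d n : ℕ} (hd : 2 ≤ d) (lo hi : ℤ) (hlo : lo ≤ -(n:ℤ)-1) (hhi : (n:ℤ)+1 ≤ hi)
    {y : ℤ} (hy : |y| ≤ (d:ℤ)) :
    Bfun d n y = ∑ m ∈ Finset.Icc lo hi,
      ((W n (y-1-2*(d:ℤ)*m) : ℤ) - (W n (y+1-2*(d:ℤ)*m) : ℤ)) := by
  apply Finset.sum_subset
  · intro m hm
    simp only [Finset.mem_Icc] at hm ⊢
    omega
  · intro m hm hnot
    simp only [Finset.mem_Icc] at hm hnot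
    have hm' : (n:ℤ)+2 ≤ |m| := by
      rcases le_or_gt 0 m with h | h
      · rw [abs_of_nonneg h]; omega
      · rw [abs_of_neg h]; omega
    have hy2 := abs_le.mp hy
    rw [W_vanish hd n (by rw [abs_le]; constructor <;> omega) hm',
      W_vanish hd n (by rw [abs_le]; constructor <;> omega) hm']
    ring

lemma Bfun_rec {d n : ℕ} (hd : 2 ≤ d) {y : ℤ} (hy1 : 1 ≤ y) (hy2 : y ≤ (d:ℤ)-1) :
    Bfun d (n+1) y = Bfun d n (y-1) + Bfun d n y + Bfun d n (y+1) := by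
  have hd' : (2:ℤ) ≤ (d:ℤ) := by exact_mod_cast hd
  rw [Bfun_pad (n:=n+1) hd (-((n:ℤ)+2)) ((n:ℤ)+2) (by push_cast; omega) (by push_cast; omega)
        (by rw [abs_le]; omega : |y| ≤ (d:ℤ)),
      Bfun_pad (n:=n) hd (-((n:ℤ)+2)) ((n:ℤ)+2) (by omega) (by omega)
        (by rw [abs_le]; omega : |y-1| ≤ (d:ℤ)),
      Bfun_pad (n:=n) hd (-((n:ℤ)+2)) ((n:ℤ)+2) (by omega) (by omega)
        (by rw [abs_le]; omega : |y| ≤ (d:ℤ)),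
      Bfun_pad (n:=n) hd (-((n:ℤ)+2)) ((n:ℤ)+2) (by omega) (by omega)
        (by rw [abs_le]; omega : |y+1| ≤ (d:ℤ))]
  rw [← Finset.sum_add_distrib, ← Finset.sum_add_distrib]
  apply Finset.sum_congr rfl
  intro m _
  have e1 : y - 1 - 2*(d:ℤ)*m - 1 = (y-1) - 1 - 2*(d:ℤ)*m := by ring
  have e2 : y - 1 - 2*(d:ℤ)*m + 1 = (y-1) + 1 - 2*(d:ℤ)*m := by ring
  have e3 : y + 1 - 2*(d:ℤ)*m - 1 = (y+1) - 1 - 2*(d:ℤ)*m := by ring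
  have e4 : y + 1 - 2*(d:ℤ)*m + 1 = (y+1) + 1 - 2*(d:ℤ)*m := by ring
  have e5 : (y-1) + 1 = y := by ring
  have e6 : (y+1) - 1 = y := by ring
  rw [W_succ, W_succ, e1, e2, e3, e4, e5, e6]
  push_cast
  ring
lemma Bfun_boundary_zero {d n : ℕ} (hd : 2 ≤ d) : Bfun d n 0 = 0 := by
  have key : ∀ m : ℤ, (W n (0-1-2*(d:ℤ)*m) : ℤ) = (W n (1 + 2*(d:ℤ)*m) : ℤ) := by
    intro m
    have e : (0:ℤ)-1-2*(d:ℤ)*m = -(1 + 2*(d:ℤ)*m) := by ring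
    rw [e, W_neg]
  rw [Bfun]
  rw [Finset.sum_congr rfl (fun m _ => by rw [key m])]
  rw [Finset.sum_sub_distrib]
  have : ∑ m ∈ Finset.Icc (-(n:ℤ)-1) ((n:ℤ)+1), (W n (1 + 2*(d:ℤ)*m) : ℤ)
      = ∑ m ∈ Finset.Icc (-(n:ℤ)-1) ((n:ℤ)+1), (W n (0+1-2*(d:ℤ)*m) : ℤ) := by
    apply Finset.sum_nbij' (i := fun m => -m) (j := fun m => -m)
    · intro m hm; simp only [Finset.mem_Icc] at hm ⊢; omega
    · intro m hm; simp only [Finset.mem_Icc] at hm ⊢; omega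
    · intro m _; ring
    · intro m _; ring
    · intro m _
      congr 1
      ring
  rw [this, sub_self]

lemma Bfun_boundary_d {d n : ℕ} (hd : 2 ≤ d) : Bfun d n (d:ℤ) = 0 := by
  have hd' : (2:ℤ) ≤ (d:ℤ) := by exact_mod_cast hd
  rw [Bfun_pad hd (-(n:ℤ)-1) ((n:ℤ)+2) (by omega) (by omega)
    (by rw [abs_le]; omega : |(d:ℤ)| ≤ (d:ℤ))]
  rw [Finset.sum_sub_distrib]
  have : ∑ m ∈ Finset.Icc (-(n:ℤ)-1) ((n:ℤ)+2), (W n ((d:ℤ)-1-2*(d:ℤ)*m) : ℤ)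
      = ∑ m ∈ Finset.Icc (-(n:ℤ)-1) ((n:ℤ)+2), (W n ((d:ℤ)+1-2*(d:ℤ)*m) : ℤ) := by
    apply Finset.sum_nbij' (i := fun m => 1-m) (j := fun m => 1-m)
    · intro m hm
      simp only [Finset.mem_Icc] at hm ⊢
      omega
    · intro m hm
      simp only [Finset.mem_Icc] at hm ⊢
      omega
    · intro m _; ring
    · intro m _; ring
    · intro m _
      have e : (d:ℤ)+1-2*(d:ℤ)*(1-m) = -((d:ℤ)-1-2*(d:ℤ)*m) := by ring
      rw [e, W_neg]
  rw [this, sub_self]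

lemma Bfun_zero_eval {d : ℕ} (hd : 2 ≤ d) {y : ℤ} (h0 : 0 ≤ y) (h1 : y ≤ (d:ℤ)) :
    Bfun d 0 y = if y = 1 then 1 else 0 := by
  have hd' : (2:ℤ) ≤ (d:ℤ) := by exact_mod_cast hd
  have hIcc : Finset.Icc (-((0:ℕ):ℤ)-1) (((0:ℕ):ℤ)+1) = {-1, 0, 1} := by
    ext x
    simp only [Finset.mem_Icc, Finset.mem_insert, Finset.mem_singleton]
    push_cast
    omega
  rw [Bfun, hIcc]
  rw [Finset.sum_insert (by decide), Finset.sum_insert (by decide), Finset.sum_singleton]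
  simp only [W]
  simp only [apply_ite (Nat.cast : ℕ → ℤ), Nat.cast_one, Nat.cast_zero]
  split_ifs <;> omega

lemma card_eq_Bfun {d : ℕ} (hd : 2 ≤ d) :
    ∀ n : ℕ, ∀ y : ℤ, 0 ≤ y → y ≤ (d:ℤ) → ((pathsTo d n y).card : ℤ) = Bfun d n y := by
  have hd' : (2:ℤ) ≤ (d:ℤ) := by exact_mod_cast hd
  intro n
  induction n with
  | zero =>
      intro y h0 h1
      rw [pathsTo_zero_card, Bfun_zero_eval hd h0 h1]
      split_ifs <;> norm_num
  | succ n ih =>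
      intro y h0 h1
      rcases eq_or_lt_of_le h0 with h | h
      · rw [← h, pathsTo_out (by omega), Bfun_boundary_zero hd, Finset.card_empty,
          Nat.cast_zero]
      · rcases eq_or_lt_of_le h1 with h' | h'
        · rw [h', pathsTo_out (by omega), Bfun_boundary_d hd, Finset.card_empty, Nat.cast_zero]
        · have hy1 : 1 ≤ y := by omega
          have hy2 : y ≤ (d:ℤ) - 1 := by omega
          rw [card_pathsTo_succ hy1 hy2, Bfun_rec hd hy1 hy2]
          push_cast
          rw [ih (y-1) (by omega) (by omega), ih y (by omega) (by omega),
            ih (y+1) (by omega) (by omega)]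

lemma tele (g : ℕ → ℤ) : ∀ N : ℕ,
    ∑ i ∈ Finset.range N, (g i - g (i+2)) = g 0 + g 1 - g N - g (N+1)
  | 0 => by simp
  | (N+1) => by
      rw [Finset.sum_range_succ, tele g N]
      ring

lemma sum_Icc_one {d : ℕ} (hd : 2 ≤ d) (f : ℤ → ℤ) :
    ∑ y ∈ Finset.Icc (1:ℤ) ((d:ℤ)-1), f y = ∑ i ∈ Finset.range (d-1), f ((i:ℤ)+1) := by
  have hd' : (2:ℤ) ≤ (d:ℤ) := by exact_mod_cast hd
  apply Finset.sum_nbij' (g := fun i : ℕ => f ((i:ℤ)+1)) (i := fun y => (y-1).toNat) (j := fun i => (i:ℤ)+1)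
  · intro y hy
    simp only [Finset.mem_Icc] at hy
    simp only [Finset.mem_range]
    omega
  · intro i hi
    simp only [Finset.mem_range] at hi
    simp only [Finset.mem_Icc]
    omega
  · intro y hy
    simp only [Finset.mem_Icc] at hy
    omega
  · intro i _
    omega
  · intro y hy
    simp only [Finset.mem_Icc] at hy
    congr 1
    omega

lemma sum_y {d : ℕ} (hd : 2 ≤ d) (n : ℕ) (c : ℤ) :
    ∑ y ∈ Finset.Icc (1:ℤ) ((d:ℤ)-1), ((W n (y-1-c) : ℤ) - (W n (y+1-c) : ℤ))
      = (W n (0-c) : ℤ) + (W n (1-c) : ℤ) - (W n ((d:ℤ)-1-c) : ℤ) - (W n ((d:ℤ)-c) : ℤ) := by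
  rw [sum_Icc_one hd]
  have step : ∀ i ∈ Finset.range (d-1),
      ((W n (((i:ℤ)+1)-1-c) : ℤ) - (W n (((i:ℤ)+1)+1-c) : ℤ))
        = (fun i : ℕ => (W n ((i:ℤ)-c) : ℤ)) i - (fun i : ℕ => (W n ((i:ℤ)-c) : ℤ)) (i+2) := by
    intro i _
    simp only
    congr 2 <;> push_cast <;> ring
  rw [Finset.sum_congr rfl step, tele]
  have h1 : (((d-1 : ℕ):ℤ)) = (d:ℤ)-1 := by
    have : 1 ≤ d := by omega
    push_cast [this]
    ring
  have h2 : (((d-1+1 : ℕ):ℤ)) = (d:ℤ) := by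
    have : 1 ≤ d := by omega
    push_cast [this]
    ring
  rw [h1, h2]
  norm_num

/-- Binomial-coefficient formula for the three-choice corridor numbers:
`c'_n = Σ_{j=0}^{n} C(n,j) Σ_{m∈ℤ} [C(j+1, 2dm − j + n) − C(j+1, 2dm − j + n + d)]`. -/
theorem motzkin_formula (d : ℕ) (hd : 2 ≤ d) (n : ℕ) :
    (motzkinCount d n : ℤ) =
      ∑ j ∈ Finset.range (n + 1), (n.choose j : ℤ) *
        ∑ᶠ m : ℤ, ((binomZ (j + 1) (2 * d * m - j + n) : ℤ) -
          (binomZ (j + 1) (2 * d * m - j + n + d) : ℤ)) := by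
  classical
  have hd' : (2:ℤ) ≤ (d:ℤ) := by exact_mod_cast hd
  -- Step 1: replace the finsum by a finite sum over Icc
  have hsupp : ∀ j ∈ Finset.range (n+1),
      (∑ᶠ m : ℤ, ((binomZ (j + 1) (2 * d * m - j + n) : ℤ) -
          (binomZ (j + 1) (2 * d * m - j + n + d) : ℤ)))
        = ∑ m ∈ Finset.Icc (-(n:ℤ)-1) ((n:ℤ)+1),
            ((binomZ (j + 1) (2 * d * m - j + n) : ℤ) -
              (binomZ (j + 1) (2 * d * m - j + n + d) : ℤ)) := by
    intro j hj
    simp only [Finset.mem_range] at hj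
    have hjn : (j:ℤ) ≤ (n:ℤ) := by exact_mod_cast Nat.le_of_lt_succ hj
    apply finsum_eq_sum_of_support_subset
    intro m hm
    simp only [Function.mem_support] at hm
    by_contra hmI
    apply hm
    simp only [Finset.coe_Icc, Set.mem_Icc, not_and_or, not_le] at hmI
    rcases hmI with h | h
    · have hm2 : m ≤ -(n:ℤ)-2 := by omega
      have p1 : ((d:ℤ)-2)*m ≤ 0 :=
        mul_nonpos_of_nonneg_of_nonpos (by linarith) (by omega)
      have p2 : ((d:ℤ)-2)*(2*m+1) ≤ 0 :=
        mul_nonpos_of_nonneg_of_nonpos (by linarith) (by omega)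
      have k1 : 2 * (d:ℤ) * m - j + n < 0 := by nlinarith
      have k2 : 2 * (d:ℤ) * m - j + n + d < 0 := by nlinarith
      rw [binomZ_neg k1, binomZ_neg k2]
      norm_num
    · have hm2 : (n:ℤ)+2 ≤ m := by omega
      have p1 : 0 ≤ ((d:ℤ)-2)*m := mul_nonneg (by linarith) (by omega)
      have k1 : (((j+1:ℕ)):ℤ) < 2 * (d:ℤ) * m - j + n := by push_cast; nlinarith
      have k2 : (((j+1:ℕ)):ℤ) < 2 * (d:ℤ) * m - j + n + d := by push_cast; nlinarith
      rw [binomZ_big k1, binomZ_big k2]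
      norm_num
  have hsupp' : ∀ j ∈ Finset.range (n+1),
      (n.choose j : ℤ) * (∑ᶠ m : ℤ, ((binomZ (j + 1) (2 * d * m - j + n) : ℤ) -
          (binomZ (j + 1) (2 * d * m - j + n + d) : ℤ)))
        = (n.choose j : ℤ) * ∑ m ∈ Finset.Icc (-(n:ℤ)-1) ((n:ℤ)+1),
            ((binomZ (j + 1) (2 * d * m - j + n) : ℤ) -
              (binomZ (j + 1) (2 * d * m - j + n + d) : ℤ)) :=
    fun j hj => by rw [hsupp j hj]
  rw [Finset.sum_congr rfl hsupp']
  -- Step 2: swap the sums and evaluate the inner binomial sum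
  rw [Finset.sum_congr rfl (fun j _ => Finset.mul_sum _ _ _), Finset.sum_comm]
  have hper : ∀ m ∈ Finset.Icc (-(n:ℤ)-1) ((n:ℤ)+1),
      (∑ j ∈ Finset.range (n+1), (n.choose j : ℤ) *
        ((binomZ (j + 1) (2 * d * m - j + n) : ℤ) -
          (binomZ (j + 1) (2 * d * m - j + n + d) : ℤ)))
      = (((W n (2*(d:ℤ)*m) : ℤ) + (W n (2*(d:ℤ)*m - 1) : ℤ))
        - ((W n (2*(d:ℤ)*m + d) : ℤ) + (W n (2*(d:ℤ)*m + d - 1) : ℤ))) := by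
    intro m _
    have e : ∀ j ∈ Finset.range (n+1), (n.choose j : ℤ) *
        ((binomZ (j + 1) (2 * d * m - j + n) : ℤ) -
          (binomZ (j + 1) (2 * d * m - j + n + d) : ℤ))
        = ((n.choose j * binomZ (j+1) ((2*(d:ℤ)*m) + n - j) : ℕ) : ℤ)
          - ((n.choose j * binomZ (j+1) ((2*(d:ℤ)*m + d) + n - j) : ℕ) : ℤ) := by
      intro j _
      have a1 : 2 * (d:ℤ) * m - j + n = (2*(d:ℤ)*m) + (n:ℤ) - (j:ℤ) := by ring
      have a2 : 2 * (d:ℤ) * m - j + n + d = (2*(d:ℤ)*m + d) + (n:ℤ) - (j:ℤ) := by ring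
      rw [a2, a1]
      push_cast
      ring
    rw [Finset.sum_congr rfl e, Finset.sum_sub_distrib, ← Nat.cast_sum, ← Nat.cast_sum,
      S_eq, S_eq]
    push_cast
    have e1 : 2*(d:ℤ)*m + d - 1 = 2*(d:ℤ)*m + (d:ℤ) - 1 := by ring
    ring
  rw [Finset.sum_congr rfl hper]
  -- Step 3: the left-hand side
  have LHS_eq : ((motzkinCount d n : ℕ) : ℤ)
      = ∑ m ∈ Finset.Icc (-(n:ℤ)-1) ((n:ℤ)+1), ∑ y ∈ Finset.Icc (1:ℤ) ((d:ℤ)-1),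
          ((W n (y-1-2*(d:ℤ)*m) : ℤ) - (W n (y+1-2*(d:ℤ)*m) : ℤ)) := by
    rw [motzkinCount_eq, card_paths_fiber hd, Nat.cast_sum]
    rw [Finset.sum_congr rfl (fun y hy => card_eq_Bfun hd n y
      (by simp only [Finset.mem_Icc] at hy; omega) (by simp only [Finset.mem_Icc] at hy; omega))]
    unfold Bfun
    exact Finset.sum_comm
  rw [LHS_eq]
  -- Step 4: telescope in y and reindex in m
  rw [Finset.sum_congr rfl (fun m _ => sum_y hd n (2*(d:ℤ)*m))]
  have pw : ∀ m ∈ Finset.Icc (-(n:ℤ)-1) ((n:ℤ)+1),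
      ((W n (0-2*(d:ℤ)*m) : ℤ) + (W n (1-2*(d:ℤ)*m) : ℤ)
        - (W n ((d:ℤ)-1-2*(d:ℤ)*m) : ℤ) - (W n ((d:ℤ)-2*(d:ℤ)*m) : ℤ))
      = (((W n (2*(d:ℤ)*m) : ℤ) + (W n (2*(d:ℤ)*m - 1) : ℤ))
          - ((W n ((d:ℤ)-1-2*(d:ℤ)*m) : ℤ) + (W n ((d:ℤ)-2*(d:ℤ)*m) : ℤ))) := by
    intro m _
    have e1 : (0:ℤ)-2*(d:ℤ)*m = -(2*(d:ℤ)*m) := by ring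
    have e2 : (1:ℤ)-2*(d:ℤ)*m = -(2*(d:ℤ)*m - 1) := by ring
    rw [e1, e2, W_neg, W_neg]
    ring
  rw [Finset.sum_congr rfl pw]
  rw [Finset.sum_sub_distrib, Finset.sum_sub_distrib]
  congr 1
  apply Finset.sum_nbij' (i := fun m : ℤ => -m) (j := fun m : ℤ => -m)
  · intro m hm; simp only [Finset.mem_Icc] at hm ⊢; omega
  · intro m hm; simp only [Finset.mem_Icc] at hm ⊢; omega
  · intro m _; ring
  · intro m _; ring
  · intro m _
    have f1 : 2*(d:ℤ)*(-m) + d = (d:ℤ) - 2*(d:ℤ)*m := by ring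
    have f2 : 2*(d:ℤ)*(-m) + d - 1 = (d:ℤ) - 1 - 2*(d:ℤ)*m := by ring
    rw [f2, f1]
    ring
end
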